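/- Let Y be a (d+1)-uniform family of subsets of [n] with |∂_d Y| = (d+1)/(n−d−1) · |Y| and Y nonempty. Then |Y| ≥ C(n−1, d+1). -/

import Mathlib

open Finset Colex
open scoped FinsetFamily

private lemma exists_lower_subset {β : Type*} [DecidableEq β] [LinearOrder β] :
    ∀ (m : ℕ) (L : Finset β), m ≤ L.card →
      ∃ T, T ⊆ L ∧ T.card = m ∧ ∀ x ∈ T, ∀ y ∈ L, y ≤ x → y ∈ T := by
  intro m
  induction m with
  | zero => exact fun L _ => ⟨∅, empty_subset _, card_empty, by simp⟩
  | succ m ih =>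
    intro L hm
    obtain ⟨T, hTL, hTcard, hTlow⟩ := ih L (Nat.le_of_succ_le hm)
    have hne : (L \ T).Nonempty := by
      rw [sdiff_nonempty]
      intro hsub
      have := card_le_card hsub
      omega
    set x := (L \ T).min' hne with hx
    have hxL : x ∈ L := (mem_sdiff.1 ((L \ T).min'_mem hne)).1
    have hxT : x ∉ T := (mem_sdiff.1 ((L \ T).min'_mem hne)).2
    refine ⟨insert x T, insert_subset hxL hTL, by rw [card_insert_of_notMem hxT, hTcard], ?_⟩
    intro z hz y hy hyz
    rcases mem_insert.1 hz with rfl | hzT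
    · by_cases hyT : y ∈ T
      · exact mem_insert_of_mem hyT
      · have : x ≤ y := min'_le _ _ (mem_sdiff.2 ⟨hy, hyT⟩)
        have : y = x := le_antisymm hyz this
        simp [this]
    · exact mem_insert_of_mem (hTlow z hzT y hy hyz)

private lemma exists_initSeg_card (N r m : ℕ)
    (hm : m ≤ ((univ : Finset (Fin N)).powersetCard r).card) :
    ∃ 𝒞 : Finset (Finset (Fin N)), IsInitSeg 𝒞 r ∧ 𝒞.card = m := by
  classical
  set L := ((univ : Finset (Fin N)).powersetCard r).image toColex with hL
  have hLcard : L.card = ((univ : Finset (Fin N)).powersetCard r).card :=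
    card_image_of_injective _ (fun _ _ h => toColex_inj.1 h)
  obtain ⟨T, hTL, hTcard, hTlow⟩ := exists_lower_subset m L (hLcard ▸ hm)
  have hmem : ∀ A : Finset (Fin N), A ∈ T.image ofColex ↔ toColex A ∈ T := by
    intro A
    constructor
    · rintro hA
      obtain ⟨x, hx, rfl⟩ := mem_image.1 hA
      simpa using hx
    · intro hA
      exact mem_image.2 ⟨toColex A, hA, rfl⟩
  have hsized : ∀ A : Finset (Fin N), toColex A ∈ T → A.card = r := by
    intro A hA
    have := hTL hA
    rw [hL, mem_image] at this
    obtain ⟨B, hB, hBA⟩ := this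
    rw [toColex_inj] at hBA
    subst hBA
    exact (mem_powersetCard_univ.1 hB)
  refine ⟨T.image ofColex, ⟨?_, ?_⟩, ?_⟩
  · intro A hA
    rw [mem_coe, hmem] at hA
    exact hsized A hA
  · intro s t hs hts
    rw [hmem] at hs ⊢
    refine hTlow _ hs _ ?_ hts.1.le
    rw [hL, mem_image]
    exact ⟨t, mem_powersetCard_univ.2 hts.2, rfl⟩
  · rw [card_image_of_injective _ (fun _ _ h => ofColex_inj.1 h), hTcard]

private lemma arith_nonstrict (d b u C c₁ m' s' : ℕ) (hm' : m' ≤ c₁)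
    (id1 : (d+2)*C = b*c₁) (ihs : (d+1)*m' ≤ (b+1)*s') :
    (d+2)*(C+m') ≤ (b+1+u)*(c₁+s') := by
  have key : (b+1)*((d+2)*(C+m')) ≤ (b+1)*((b+1+u)*(c₁+s')) := by
    have e1 : (b+1)*((d+2)*(C+m')) = (b+1)*(b*c₁) + (b+1)*((d+1)*m') + (b+1)*m' := by
      have : (b+1)*((d+2)*(C+m')) = (b+1)*((d+2)*C) + (b+1)*((d+1)*m') + (b+1)*m' := by ring
      rw [this, id1]
    have e2 : (b+1)*((b+1+u)*(c₁+s')) =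
        (b+1)*(b*c₁) + (b+1)*((u+1)*c₁) + (b+1)*((b+1+u)*s') := by ring
    have e3 : (b+1+u)*((d+1)*m') ≤ (b+1)*((b+1+u)*s') := by
      calc (b+1+u)*((d+1)*m') ≤ (b+1+u)*((b+1)*s') := Nat.mul_le_mul_left _ ihs
        _ = (b+1)*((b+1+u)*s') := by ring
    have e4 : (b+1+u)*((d+1)*m') = (b+1)*((d+1)*m') + u*((d+1)*m') := by ring
    rw [e1, e2]
    rcases le_or_gt (b+1) (u*(d+1)) with hc | hc
    · have h5 : (b+1)*m' ≤ u*((d+1)*m') := by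
        calc (b+1)*m' ≤ (u*(d+1))*m' := Nat.mul_le_mul_right _ hc
          _ = u*((d+1)*m') := by ring
      linarith [Nat.zero_le ((b+1)*((u+1)*c₁))]
    · obtain ⟨k, hk⟩ : ∃ k, b+1 = k + u*(d+1) := ⟨b+1-u*(d+1), by omega⟩
      have h6 : (b+1)*m' = k*m' + u*((d+1)*m') := by rw [hk]; ring
      have h5 : k*m' ≤ (b+1)*((u+1)*c₁) := by
        calc k*m' ≤ (b+1)*m' := Nat.mul_le_mul_right _ (by omega)
          _ ≤ (b+1)*c₁ := Nat.mul_le_mul_left _ hm'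
          _ ≤ (b+1)*((u+1)*c₁) := Nat.mul_le_mul_left _ (by
              calc c₁ = 1*c₁ := (one_mul c₁).symm
                _ ≤ (u+1)*c₁ := Nat.mul_le_mul_right _ (by omega))
      linarith
  exact Nat.le_of_mul_le_mul_left key (Nat.succ_pos b)

private lemma arith_strict (d b u C c₁ m' s' : ℕ) (hm' : m' ≤ c₁) (hc₁ : 1 ≤ c₁)
    (id1 : (d+2)*C = b*c₁) (ihs : (d+1)*m' ≤ (b+1)*s')
    (hcase : m' < c₁ ∨ 1 ≤ u) :
    (d+2)*(C+m') < (b+1+u)*(c₁+s') := by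
  have key : (b+1)*((d+2)*(C+m')) < (b+1)*((b+1+u)*(c₁+s')) := by
    have e1 : (b+1)*((d+2)*(C+m')) = (b+1)*(b*c₁) + (b+1)*((d+1)*m') + (b+1)*m' := by
      have : (b+1)*((d+2)*(C+m')) = (b+1)*((d+2)*C) + (b+1)*((d+1)*m') + (b+1)*m' := by ring
      rw [this, id1]
    have e2 : (b+1)*((b+1+u)*(c₁+s')) =
        (b+1)*(b*c₁) + (b+1)*((u+1)*c₁) + (b+1)*((b+1+u)*s') := by ring
    have e3 : (b+1+u)*((d+1)*m') ≤ (b+1)*((b+1+u)*s') := by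
      calc (b+1+u)*((d+1)*m') ≤ (b+1+u)*((b+1)*s') := Nat.mul_le_mul_left _ ihs
        _ = (b+1)*((b+1+u)*s') := by ring
    have e4 : (b+1+u)*((d+1)*m') = (b+1)*((d+1)*m') + u*((d+1)*m') := by ring
    have hpos : 0 < (b+1)*((u+1)*c₁) := by positivity
    rw [e1, e2]
    rcases le_or_gt (b+1) (u*(d+1)) with hc | hc
    · have h5 : (b+1)*m' ≤ u*((d+1)*m') := by
        calc (b+1)*m' ≤ (u*(d+1))*m' := Nat.mul_le_mul_right _ hc
          _ = u*((d+1)*m') := by ring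
      linarith
    · obtain ⟨k, hk⟩ : ∃ k, b+1 = k + u*(d+1) := ⟨b+1-u*(d+1), by omega⟩
      have h6 : (b+1)*m' = k*m' + u*((d+1)*m') := by rw [hk]; ring
      have h5 : k*m' + (b+1) ≤ (b+1)*((u+1)*c₁) := by
        rcases hcase with hlt | hu
        · calc k*m' + (b+1) ≤ (b+1)*m' + (b+1) :=
                Nat.add_le_add_right (Nat.mul_le_mul_right _ (by omega)) _
            _ = (b+1)*(m'+1) := by ring
            _ ≤ (b+1)*c₁ := Nat.mul_le_mul_left _ hlt
            _ ≤ (b+1)*((u+1)*c₁) := Nat.mul_le_mul_left _ (by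
                calc c₁ = 1*c₁ := (one_mul c₁).symm
                  _ ≤ (u+1)*c₁ := Nat.mul_le_mul_right _ (by omega))
        · calc k*m' + (b+1) ≤ (b+1)*c₁ + (b+1)*c₁ := by
                refine Nat.add_le_add ?_ ?_
                · calc k*m' ≤ (b+1)*m' := Nat.mul_le_mul_right _ (by omega)
                    _ ≤ (b+1)*c₁ := Nat.mul_le_mul_left _ hm'
                · calc b+1 = (b+1)*1 := (mul_one _).symm
                    _ ≤ (b+1)*c₁ := Nat.mul_le_mul_left _ hc₁
            _ = (b+1)*(2*c₁) := by ring
            _ ≤ (b+1)*((u+1)*c₁) := Nat.mul_le_mul_left _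
                (Nat.mul_le_mul_right _ (by omega))
      linarith
  exact Nat.lt_of_mul_lt_mul_left key

set_option maxHeartbeats 1000000 in
private lemma lovasz_ratio : ∀ (d N t : ℕ) (Y : Finset (Finset (Fin N))),
    (Y : Set (Finset (Fin N))).Sized (d+1) → 1 ≤ Y.card →
    (Y.card ≤ (t + d).choose (d + 1) → (d + 1) * Y.card ≤ t * #(∂ Y)) ∧
    (Y.card < (t + d).choose (d + 1) → (d + 1) * Y.card < t * #(∂ Y)) := by
  intro d
  induction d with
  | zero =>
    intro N t Y hY hm
    have hsh : ∂ Y = {∅} := by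
      ext u
      simp only [mem_shadow_iff, mem_singleton]
      constructor
      · rintro ⟨s, hs, a, ha, rfl⟩
        have hcard : s.card = 1 := hY hs
        rw [card_eq_one] at hcard
        obtain ⟨b, rfl⟩ := hcard
        rw [mem_singleton] at ha
        subst ha
        simp
      · rintro rfl
        obtain ⟨A, hA⟩ := card_pos.1 hm
        have hcard : A.card = 1 := hY hA
        rw [card_eq_one] at hcard
        obtain ⟨b, rfl⟩ := hcard
        exact ⟨{b}, hA, b, mem_singleton_self b, by simp⟩
    rw [hsh, card_singleton]
    rw [Nat.add_zero, Nat.choose_one_right]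
    constructor <;> intro h <;> omega
  | succ d ih =>
    intro N t Y hY hm1
    have hYsub : Y ⊆ (univ : Finset (Fin N)).powersetCard (d+2) := fun A hA =>
      mem_powersetCard_univ.2 (hY hA)
    obtain ⟨𝒞, h𝒞init, h𝒞card⟩ := exists_initSeg_card N (d+2) Y.card (card_le_card hYsub)
    have hkk : #(∂ 𝒞) ≤ #(∂ Y) := by
      convert kruskal_katona hY (le_of_eq h𝒞card) h𝒞init using 2 <;> congr!
    suffices h : (Y.card ≤ (t + (d+1)).choose (d + 2) → (d + 2) * Y.card ≤ t * #(∂ 𝒞)) ∧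
        (Y.card < (t + (d+1)).choose (d + 2) → (d + 2) * Y.card < t * #(∂ 𝒞)) by
      exact ⟨fun hc => (h.1 hc).trans (Nat.mul_le_mul_left t hkk),
             fun hc => lt_of_lt_of_le (h.2 hc) (Nat.mul_le_mul_left t hkk)⟩
    have h𝒞ne : 𝒞.Nonempty := card_pos.1 (by omega)
    obtain ⟨s, hscard, rfl⟩ := h𝒞init.exists_initSeg h𝒞ne
    rcases eq_or_lt_of_le hm1 with h1 | hm2
    · -- Y.card = 1
      have hsing : initSeg s = {s} := by
        have hcard1 : (initSeg s).card = 1 := by omega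
        rw [card_eq_one] at hcard1
        obtain ⟨A, hA⟩ := hcard1
        have := mem_initSeg_self (s := s)
        rw [hA, mem_singleton] at this
        rw [hA, this]
      have hshadow : ∂ (initSeg s) = s.image s.erase := by
        rw [hsing]
        ext u
        simp only [mem_shadow_iff, mem_singleton, mem_image]
        constructor
        · rintro ⟨v, rfl, a, ha, rfl⟩
          exact ⟨a, ha, rfl⟩
        · rintro ⟨a, ha, rfl⟩
          exact ⟨s, rfl, a, ha, rfl⟩
      have hScard : #(∂ (initSeg s)) = d + 2 := by
        rw [hshadow, card_image_of_injOn, hscard]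
        intro a ha b hb hab
        by_contra hne
        have h1 : a ∈ s.erase b := mem_erase.2 ⟨hne, ha⟩
        rw [← hab] at h1
        exact notMem_erase a s h1
      rw [hScard, ← h1]
      constructor
      · intro hle
        have ht1 : 1 ≤ t := by
          by_contra ht0
          have : t = 0 := by omega
          subst this
          rw [Nat.zero_add, Nat.choose_eq_zero_of_lt (by omega)] at hle
          omega
        nlinarith
      · intro hlt
        have ht2 : 2 ≤ t := by
          by_contra ht1
          have : t + (d+1) ≤ d + 2 := by omega
          have := Nat.choose_le_choose (d+2) this
          rw [Nat.choose_self] at this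
          omega
        nlinarith
    · -- Y.card ≥ 2
      have hsne : s.Nonempty := card_pos.1 (by omega)
      set w := s.max' hsne with hw
      have hsub : ∀ A ∈ initSeg s, A ⊆ Iic w := by
        intro A hA
        rw [mem_initSeg] at hA
        intro x hx
        exact mem_Iic.2 (forall_le_mono hA.2 (fun b hb => le_max' s b hb) x hx)
      have hfull : ∀ B : Finset (Fin N), B ⊆ Iio w → B.card = d+2 → B ∈ initSeg s := by
        intro B hBsub hBcard
        rw [mem_initSeg]
        refine ⟨by omega, le_of_lt ?_⟩
        rw [toColex_lt_toColex_iff_exists_forall_lt]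
        exact ⟨w, s.max'_mem hsne, fun h => absurd (mem_Iio.1 (hBsub h)) (lt_irrefl w),
          fun b hb _ => mem_Iio.1 (hBsub hb)⟩
      set a := (w : ℕ) with ha
      have hIio : (Iio w).card = a := by rw [ha]; exact Fin.card_Iio w
      have hIic : (Iic w).card = a + 1 := by rw [ha]; exact Fin.card_Iic w
      set 𝒞₀ := (initSeg s).filter (fun A => w ∉ A) with h𝒞₀def
      set 𝒞₁ := (initSeg s).filter (fun A => w ∈ A) with h𝒞₁def
      have h𝒞₀ : 𝒞₀ = (Iio w).powersetCard (d+2) := by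
        ext A
        rw [h𝒞₀def, mem_filter, mem_powersetCard]
        constructor
        · rintro ⟨hA, hwA⟩
          have hsized : A.card = d + 2 := h𝒞init.1 hA
          refine ⟨fun x hx => mem_Iio.2 ?_, hsized⟩
          exact lt_of_le_of_ne (mem_Iic.1 (hsub A hA hx)) (fun h => hwA (h ▸ hx))
        · rintro ⟨hAsub, hAcard⟩
          exact ⟨hfull A hAsub hAcard, fun h => absurd (mem_Iio.1 (hAsub h)) (lt_irrefl w)⟩
      have ha2 : d + 2 ≤ a := by
        by_contra hlt
        have hall : ∀ A ∈ initSeg s, A = Iic w := by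
          intro A hA
          have hsized : A.card = d + 2 := h𝒞init.1 hA
          apply eq_of_subset_of_card_le (hsub A hA)
          omega
        have : (initSeg s).card ≤ 1 := by
          apply card_le_one.2
          intro A hA B hB
          rw [hall A hA, hall B hB]
        omega
      set link := 𝒞₁.image (fun A => A.erase w) with hlinkdef
      have h𝒞₁mem : ∀ A ∈ 𝒞₁, w ∈ A ∧ A ∈ initSeg s := by
        intro A hA
        rw [h𝒞₁def, mem_filter] at hA
        exact ⟨hA.2, hA.1⟩
      have hlink_card : link.card = 𝒞₁.card := by
        apply card_image_of_injOn
        intro A hA B hB hAB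
        have hwA := (h𝒞₁mem A (mem_coe.1 hA)).1
        have hwB := (h𝒞₁mem B (mem_coe.1 hB)).1
        have hAB' : A.erase w = B.erase w := hAB
        rw [← insert_erase hwA, hAB', insert_erase hwB]
      have hlink_sized : (link : Set (Finset (Fin N))).Sized (d+1) := by
        intro L hL
        rw [mem_coe, hlinkdef, mem_image] at hL
        obtain ⟨A, hA, rfl⟩ := hL
        rw [card_erase_of_mem (h𝒞₁mem A hA).1, h𝒞init.1 (h𝒞₁mem A hA).2]
        omega
      have hlink_sub : ∀ L ∈ link, L ⊆ Iio w := by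
        intro L hL
        rw [hlinkdef, mem_image] at hL
        obtain ⟨A, hA, rfl⟩ := hL
        intro x hx
        rw [mem_erase] at hx
        exact mem_Iio.2 (lt_of_le_of_ne
          (mem_Iic.1 (hsub A (h𝒞₁mem A hA).2 hx.2)) hx.1)
      have hm'le : 𝒞₁.card ≤ a.choose (d+1) := by
        rw [← hlink_card]
        have : link ⊆ (Iio w).powersetCard (d+1) := by
          intro L hL
          exact mem_powersetCard.2 ⟨hlink_sub L hL, hlink_sized hL⟩
        calc link.card ≤ ((Iio w).powersetCard (d+1)).card := card_le_card this
          _ = a.choose (d+1) := by rw [card_powersetCard, hIio]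
      have hm'1 : 1 ≤ 𝒞₁.card := by
        apply card_pos.2
        exact ⟨s, by rw [h𝒞₁def, mem_filter]; exact ⟨mem_initSeg_self, s.max'_mem hsne⟩⟩
      have hsplit : Y.card = a.choose (d+2) + 𝒞₁.card := by
        have hfil : #𝒞₁ + #𝒞₀ = #(initSeg s) := by
          rw [h𝒞₁def, h𝒞₀def]
          exact card_filter_add_card_filter_not (fun A => w ∈ A)
        have h0card : #𝒞₀ = a.choose (d+2) := by
          rw [h𝒞₀, card_powersetCard, hIio]
        omega
      -- shadow decomposition
      have hshadow_decomp : ∂ (initSeg s) =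
          (Iio w).powersetCard (d+1) ∪ (∂ link).image (insert w) := by
        ext T
        rw [mem_union, mem_shadow_iff_exists_mem_card_add_one]
        constructor
        · rintro ⟨A, hA, hTA, hAcard⟩
          have hAsized : A.card = d + 2 := h𝒞init.1 hA
          have hTcard : T.card = d + 1 := by omega
          by_cases hwT : w ∈ T
          · right
            rw [mem_image]
            refine ⟨T.erase w, ?_, insert_erase hwT⟩
            rw [mem_shadow_iff_exists_mem_card_add_one]
            have hwA : w ∈ A := hTA hwT
            refine ⟨A.erase w, ?_, erase_subset_erase w hTA, ?_⟩
            · rw [hlinkdef, mem_image]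
              exact ⟨A, by rw [h𝒞₁def, mem_filter]; exact ⟨hA, hwA⟩, rfl⟩
            · rw [card_erase_of_mem hwA, card_erase_of_mem hwT]
              omega
          · left
            apply mem_powersetCard.2
            refine ⟨fun x hx => mem_Iio.2 ?_, hTcard⟩
            exact lt_of_le_of_ne (mem_Iic.1 (hsub A hA (hTA hx)))
              (fun h => hwT (h ▸ hx))
        · rintro (hT | hT)
          · rw [mem_powersetCard] at hT
            obtain ⟨hTsub, hTcard⟩ := hT
            have hss : T ⊂ Iio w := hTsub.ssubset_of_ne (fun h => by
              rw [h, hIio] at hTcard; omega)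
            obtain ⟨x, hxIio, hxT⟩ := exists_of_ssubset hss
            refine ⟨insert x T, hfull _ (insert_subset hxIio hTsub) ?_,
              subset_insert x T, ?_⟩
            · rw [card_insert_of_notMem hxT]; omega
            · rw [card_insert_of_notMem hxT]
          · rw [mem_image] at hT
            obtain ⟨T₀, hT₀, rfl⟩ := hT
            rw [mem_shadow_iff_exists_mem_card_add_one] at hT₀
            obtain ⟨L, hL, hT₀L, hLcard⟩ := hT₀
            have hLIio := hlink_sub L hL
            rw [hlinkdef, mem_image] at hL
            obtain ⟨A, hA, rfl⟩ := hL
            obtain ⟨hwA, hAinit⟩ := h𝒞₁mem A hA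
            have hT₀Iio : T₀ ⊆ Iio w := hT₀L.trans hLIio
            have hwT₀ : w ∉ T₀ := fun h => absurd (mem_Iio.1 (hT₀Iio h)) (lt_irrefl w)
            refine ⟨A, hAinit, insert_subset hwA (hT₀L.trans (erase_subset w A)), ?_⟩
            rw [card_insert_of_notMem hwT₀]
            have := card_erase_of_mem hwA
            have := h𝒞init.1 hAinit
            omega
      -- shadow cardinality
      have hSdisj : Disjoint ((Iio w).powersetCard (d+1)) ((∂ link).image (insert w)) := by
        rw [disjoint_left]
        intro T hT1 hT2
        rw [mem_powersetCard] at hT1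
        rw [mem_image] at hT2
        obtain ⟨T₀, hT₀, rfl⟩ := hT2
        exact absurd (mem_Iio.1 (hT1.1 (mem_insert_self w T₀))) (lt_irrefl w)
      have hSimage : ((∂ link).image (insert w)).card = #(∂ link) := by
        apply card_image_of_injOn
        intro T₁ hT₁ T₂ hT₂ h12
        have hsub₁ : w ∉ T₁ := by
          rw [mem_coe, mem_shadow_iff_exists_mem_card_add_one] at hT₁
          obtain ⟨L, hL, hTL, _⟩ := hT₁
          exact fun h => absurd (mem_Iio.1 (hlink_sub L hL (hTL h))) (lt_irrefl w)
        have hsub₂ : w ∉ T₂ := by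
          rw [mem_coe, mem_shadow_iff_exists_mem_card_add_one] at hT₂
          obtain ⟨L, hL, hTL, _⟩ := hT₂
          exact fun h => absurd (mem_Iio.1 (hlink_sub L hL (hTL h))) (lt_irrefl w)
        rw [← erase_insert hsub₁, h12, erase_insert hsub₂]
      have hScard : #(∂ (initSeg s)) = a.choose (d+1) + #(∂ link) := by
        rw [hshadow_decomp, card_union_of_disjoint hSdisj, card_powersetCard, hIio, hSimage]
      -- apply induction hypothesis to the link
      set b := a - (d+1) with hb
      have hb1 : 1 ≤ b := by omega
      have hab : a = d + 1 + b := by omega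
      have hIH : (d+1) * 𝒞₁.card ≤ (b+1) * #(∂ link) := by
        have := (ih N (b+1) link hlink_sized (by omega)).1
        rw [hlink_card] at this
        apply this
        have : b + 1 + d = a := by omega
        rw [this]
        exact hm'le
      have hc₁pos : 1 ≤ a.choose (d+1) := Nat.choose_pos (by omega)
      have haux : Y.card ≤ (t + (d+1)).choose (d+2) → a ≤ t + d := by
        intro hyp
        by_contra hgt
        have h1 : t + (d+1) ≤ a := by omega
        have h2 := Nat.choose_le_choose (d+2) h1
        omega
      have id1 : (d+2) * a.choose (d+2) = b * a.choose (d+1) := by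
        have h := Nat.choose_succ_right_eq a (d+1)
        calc (d+2) * a.choose (d+2) = a.choose (d+2) * (d+2) := mul_comm _ _
          _ = a.choose (d+1) * (a - (d+1)) := h
          _ = b * a.choose (d+1) := by rw [hb]; exact mul_comm _ _
      constructor
      · intro hle
        have hat := haux hle
        set u := t + d - a with hu
        have htu : t = b + 1 + u := by omega
        rw [hsplit, hScard, htu]
        exact arith_nonstrict d b u _ _ _ _ hm'le id1 hIH
      · intro hlt
        have hat := haux hlt.le
        set u := t + d - a with hu
        have htu : t = b + 1 + u := by omega
        have hcase : 𝒞₁.card < a.choose (d+1) ∨ 1 ≤ u := by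
          rcases lt_or_eq_of_le hm'le with h | h
          · exact Or.inl h
          · right
            have hpas : (a+1).choose (d+2) = a.choose (d+1) + a.choose (d+2) :=
              Nat.choose_succ_succ a (d+1)
            have hmeq : Y.card = (a+1).choose (d+2) := by omega
            by_contra hu0
            have h1 : t + (d+1) ≤ a + 1 := by omega
            have h2 := Nat.choose_le_choose (d+2) h1
            omega
        rw [hsplit, hScard, htu]
        exact arith_strict d b u _ _ _ _ hm'le hc₁pos id1 hIH hcase

theorem stmt_16 (n d : ℕ) (𝒴 : Finset (Finset (Fin n)))
    (hunif : ∀ Y ∈ 𝒴, Y.card = d + 1)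
    (hne : 𝒴.Nonempty)
    (hshadow : ((((Finset.univ : Finset (Fin n)).powersetCard d).filter
        (fun T => ∃ Y ∈ 𝒴, T ⊆ Y)).card : ℝ)
      = ((d : ℝ) + 1) / ((n : ℝ) - d - 1) * 𝒴.card) :
    (n - 1).choose (d + 1) ≤ 𝒴.card := by
  classical
  rcases le_or_gt n (d+1) with hn | hn
  · rw [Nat.choose_eq_zero_of_lt (by omega)]
    omega
  -- n ≥ d + 2
  have hfilter : ((Finset.univ : Finset (Fin n)).powersetCard d).filter
      (fun T => ∃ Y ∈ 𝒴, T ⊆ Y) = ∂ 𝒴 := by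
    ext T
    rw [mem_filter, mem_powersetCard_univ, mem_shadow_iff_exists_mem_card_add_one]
    constructor
    · rintro ⟨hTcard, A, hA, hTA⟩
      exact ⟨A, hA, hTA, by rw [hunif A hA, hTcard]⟩
    · rintro ⟨A, hA, hTA, hcard⟩
      have := hunif A hA
      exact ⟨by omega, A, hA, hTA⟩
  rw [hfilter] at hshadow
  set t := n - d - 1 with ht
  have hpos : (0:ℝ) < (n : ℝ) - d - 1 := by
    have : ((d:ℝ) + 1) < n := by exact_mod_cast hn
    linarith
  rw [div_mul_eq_mul_div, eq_div_iff hpos.ne'] at hshadow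
  have htR : ((t:ℝ)) = (n:ℝ) - d - 1 := by
    have h1 : t = n - (d+1) := by omega
    rw [h1, Nat.cast_sub (by omega)]
    push_cast
    ring
  have hnat : (d + 1) * 𝒴.card = t * #(∂ 𝒴) := by
    have hreal : (((d + 1) * 𝒴.card : ℕ) : ℝ) = ((t * #(∂ 𝒴) : ℕ) : ℝ) := by
      push_cast
      rw [htR]
      linarith [hshadow]
    exact_mod_cast hreal
  by_contra hcon
  push_neg at hcon
  have hstrict := (lovasz_ratio d n t 𝒴 (fun A hA => hunif A hA) hne.card_pos).2
    (by rw [show t + d = n - 1 by omega]; exact hcon)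
  omega
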